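/- arXiv:2205.10730 — 4 statements merged into one kernel-verified Lean document; each statement's English description precedes it below -/
import Mathlib

section
/- If 2ν + δ = 2 (i.e., (ν, δ) = (1, 0) or (ν, δ) = (0, 2)), then the orthogonal inner product graph Oi(2, q) is not connected. -/
open Matrix

/-- The Gram matrix `S` of the `(2ν+δ)`-dimensional orthogonal space over `F`
(with `Δ = ∅`, `(1)`, or `diag(1, -z)` according to `δ = 0, 1, 2`). -/
def oiMat (F : Type*) [Field F] (ν δ : ℕ) (z : F) :
    Matrix (Fin (2*ν+δ)) (Fin (2*ν+δ)) F :=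
  Matrix.of fun i j =>
    if (i : ℕ) < ν ∧ (j : ℕ) = (i : ℕ) + ν then 1
    else if (j : ℕ) < ν ∧ (i : ℕ) = (j : ℕ) + ν then 1
    else if (i : ℕ) = (j : ℕ) ∧ (i : ℕ) = 2*ν then 1
    else if (i : ℕ) = (j : ℕ) ∧ (i : ℕ) = 2*ν + 1 then -z
    else 0

/-- The vertices of the orthogonal inner product graph: nontrivial subspaces of `F^n`. -/
abbrev OiVertex (F : Type*) [Field F] (n : ℕ) :=
  {W : Submodule F (Fin n → F) // W ≠ ⊥ ∧ W ≠ ⊤}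

/-- The orthogonal inner product graph `Oi(n, q)` with respect to the symmetric matrix `S`. -/
def oiGraph (F : Type*) [Field F] (n : ℕ) (S : Matrix (Fin n) (Fin n) F) :
    SimpleGraph (OiVertex F n) where
  Adj A B := A ≠ B ∧ (∀ a ∈ A.1, ∀ b ∈ B.1, a ⬝ᵥ (S *ᵥ b) = 0)
      ∧ (∀ a ∈ B.1, ∀ b ∈ A.1, a ⬝ᵥ (S *ᵥ b) = 0)
  symm := ⟨fun A B h => ⟨h.1.symm, h.2.2, h.2.1⟩⟩
  loopless := ⟨fun A h => h.1 rfl⟩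

/-- Two subspaces of `F^n` are of the same type if they have the same dimension and the
restrictions of the bilinear form `(x, y) ↦ x S yᵀ` to them are isometric. -/
def SameType {F : Type*} [Field F] {n : ℕ} (S : Matrix (Fin n) (Fin n) F)
    (A B : Submodule F (Fin n → F)) : Prop :=
  ∃ e : A ≃ₗ[F] B,
    ∀ x y : A, ((x : Fin n → F) ⬝ᵥ (S *ᵥ (y : Fin n → F))) =
      ((e x : Fin n → F) ⬝ᵥ (S *ᵥ ((e y : Fin n → F))))

lemma walk_inv {V : Type*} (G : SimpleGraph V) (A P : V)
    (hA : ∀ x, G.Adj A x → x = P) (hP : ∀ x, G.Adj P x → x = A) :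
    ∀ u v : V, G.Walk u v → (u = A ∨ u = P) → (v = A ∨ v = P) := by
  intro u v w
  induction w with
  | nil => exact id
  | cons h p ih =>
    intro hu
    apply ih
    rcases hu with rfl | rfl
    · exact Or.inr (hA _ h)
    · exact Or.inl (hP _ h)

lemma not_conn {V : Type*} (G : SimpleGraph V) (A P C : V)
    (hA : ∀ x, G.Adj A x → x = P) (hP : ∀ x, G.Adj P x → x = A)
    (hCA : C ≠ A) (hCP : C ≠ P) : ¬ G.Connected := by
  intro h
  obtain ⟨w⟩ := h.preconnected A C
  rcases walk_inv G A P hA hP A C w (Or.inl rfl) with h' | h'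
  · exact hCA h'
  · exact hCP h'

lemma span_eq' {F : Type*} [Field F] {M : Type*} [AddCommGroup M] [Module F M]
    {v : M} {B : Submodule F M} (hB : B ≠ ⊥) (hle : B ≤ Submodule.span F {v}) :
    B = Submodule.span F {v} := by
  obtain ⟨b, hbB, hb0⟩ := Submodule.exists_mem_ne_zero_of_ne_bot hB
  obtain ⟨c, rfl⟩ := Submodule.mem_span_singleton.mp (hle hbB)
  have hc : c ≠ 0 := by rintro rfl; simp at hb0
  refine le_antisymm hle (Submodule.span_le.mpr ?_)
  intro x hx
  rcases hx with rfl
  have : c⁻¹ • (c • x) ∈ B := B.smul_mem _ hbB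
  simpa [smul_smul, inv_mul_cancel₀ hc] using this

section Aux
variable {F : Type*} [Field F]

/-- membership conditions for span of a 2-vector -/
lemma mem_span2 {v w : Fin 2 → F} (h : w ∈ Submodule.span F {v}) :
    ∃ c : F, c * v 0 = w 0 ∧ c * v 1 = w 1 := by
  obtain ⟨c, rfl⟩ := Submodule.mem_span_singleton.mp h
  exact ⟨c, rfl, rfl⟩

lemma le_span_of_coord0 {B : Submodule F (Fin 2 → F)}
    (h : ∀ b ∈ B, b 0 = 0) : B ≤ Submodule.span F {![0,1]} := by
  intro b hb
  rw [Submodule.mem_span_singleton]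
  refine ⟨b 1, funext fun i => ?_⟩
  fin_cases i <;> simp [h b hb]

lemma le_span_of_coord1 {B : Submodule F (Fin 2 → F)}
    (h : ∀ b ∈ B, b 1 = 0) : B ≤ Submodule.span F {![1,0]} := by
  intro b hb
  rw [Submodule.mem_span_singleton]
  refine ⟨b 0, funext fun i => ?_⟩
  fin_cases i <;> simp [h b hb]

lemma spanE0_ne_bot : (Submodule.span F {![1,0]} : Submodule F (Fin 2 → F)) ≠ ⊥ := by
  rw [Ne, Submodule.span_singleton_eq_bot]
  intro h
  exact one_ne_zero (congrFun h 0)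

lemma spanE1_ne_bot : (Submodule.span F {![0,1]} : Submodule F (Fin 2 → F)) ≠ ⊥ := by
  rw [Ne, Submodule.span_singleton_eq_bot]
  intro h
  exact one_ne_zero (congrFun h 1)

lemma spanE01_ne_bot : (Submodule.span F {![1,1]} : Submodule F (Fin 2 → F)) ≠ ⊥ := by
  rw [Ne, Submodule.span_singleton_eq_bot]
  intro h
  exact one_ne_zero (congrFun h 0)

lemma spanE0_ne_top : (Submodule.span F {![1,0]} : Submodule F (Fin 2 → F)) ≠ ⊤ := by
  intro h
  have : (![0,1] : Fin 2 → F) ∈ Submodule.span F {![1,0]} := h ▸ Submodule.mem_top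
  obtain ⟨c, h0, h1⟩ := mem_span2 this
  simp at h0 h1
lemma spanE1_ne_top : (Submodule.span F {![0,1]} : Submodule F (Fin 2 → F)) ≠ ⊤ := by
  intro h
  have : (![1,0] : Fin 2 → F) ∈ Submodule.span F {![0,1]} := h ▸ Submodule.mem_top
  obtain ⟨c, h0, h1⟩ := mem_span2 this
  simp at h0 h1

lemma spanE01_ne_top : (Submodule.span F {![1,1]} : Submodule F (Fin 2 → F)) ≠ ⊤ := by
  intro h
  have : (![1,0] : Fin 2 → F) ∈ Submodule.span F {![1,1]} := h ▸ Submodule.mem_top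
  obtain ⟨c, h0, h1⟩ := mem_span2 this
  simp at h0 h1
  exact one_ne_zero (h0 ▸ h1)

lemma spanE01_ne_spanE0 :
    (Submodule.span F {![1,1]} : Submodule F (Fin 2 → F)) ≠ Submodule.span F {![1,0]} := by
  intro h
  have : (![1,1] : Fin 2 → F) ∈ Submodule.span F {![1,0]} :=
    h ▸ Submodule.mem_span_singleton_self _
  obtain ⟨c, h0, h1⟩ := mem_span2 this
  simp at h0 h1

lemma spanE01_ne_spanE1 :
    (Submodule.span F {![1,1]} : Submodule F (Fin 2 → F)) ≠ Submodule.span F {![0,1]} := by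
  intro h
  have : (![1,1] : Fin 2 → F) ∈ Submodule.span F {![0,1]} :=
    h ▸ Submodule.mem_span_singleton_self _
  obtain ⟨c, h0, h1⟩ := mem_span2 this
  simp at h0 h1

lemma spanE1_ne_spanE0 :
    (Submodule.span F {![0,1]} : Submodule F (Fin 2 → F)) ≠ Submodule.span F {![1,0]} := by
  intro h
  have : (![0,1] : Fin 2 → F) ∈ Submodule.span F {![1,0]} :=
    h ▸ Submodule.mem_span_singleton_self _
  obtain ⟨c, h0, h1⟩ := mem_span2 this
  simp at h0 h1

end Aux

/-- If `2ν + δ = 2`, the orthogonal inner product graph `Oi(2, q)` is not connected. -/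
theorem stmt0 (F : Type*) [Field F] [Fintype F] (hF : ringChar F ≠ 2)
    (ν δ : ℕ) (hδ : δ ≤ 2) (hn : 2*ν + δ = 2) (z : F) (hz : ¬ IsSquare z) :
    ¬ (oiGraph F (2*ν+δ) (oiMat F ν δ z)).Connected := by
  have hcase : (ν = 1 ∧ δ = 0) ∨ (ν = 0 ∧ δ = 2) := by omega
  rcases hcase with ⟨rfl, rfl⟩ | ⟨rfl, rfl⟩
  · -- hyperbolic case: S = [[0,1],[1,0]], span{e0} is isolated
    have hS : ∀ b : Fin (2*1+0) → F,
        (![1,0] : Fin (2*1+0) → F) ⬝ᵥ (oiMat F 1 0 z *ᵥ b) = b 1 := by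
      intro b
      simp [oiMat, Matrix.mulVec, dotProduct, Fin.sum_univ_two]
    let A : OiVertex F (2*1+0) := ⟨Submodule.span F {![1,0]}, spanE0_ne_bot, spanE0_ne_top⟩
    let C : OiVertex F (2*1+0) := ⟨Submodule.span F {![0,1]}, spanE1_ne_bot, spanE1_ne_top⟩
    refine not_conn _ A A C ?_ ?_ ?_ ?_
    · intro x hx
      exfalso
      have hb : ∀ b ∈ x.1, b 1 = 0 := by
        intro b hb
        have := hx.2.1 ![1,0] (Submodule.mem_span_singleton_self _) b hb
        rwa [hS b] at this
      have : x.1 = Submodule.span F {![1,0]} := span_eq' x.2.1 (le_span_of_coord1 hb)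
      exact hx.1.symm (Subtype.ext this)
    · intro x hx
      exfalso
      have hb : ∀ b ∈ x.1, b 1 = 0 := by
        intro b hb
        have := hx.2.1 ![1,0] (Submodule.mem_span_singleton_self _) b hb
        rwa [hS b] at this
      have : x.1 = Submodule.span F {![1,0]} := span_eq' x.2.1 (le_span_of_coord1 hb)
      exact hx.1.symm (Subtype.ext this)
    · exact fun h => spanE1_ne_spanE0 (congrArg Subtype.val h)
    · exact fun h => spanE1_ne_spanE0 (congrArg Subtype.val h)
  · -- anisotropic case: S = diag(1,-z)
    have hz0 : z ≠ 0 := fun h => hz ⟨0, by simp [h]⟩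
    have hS0 : ∀ b : Fin (2*0+2) → F,
        (![1,0] : Fin (2*0+2) → F) ⬝ᵥ (oiMat F 0 2 z *ᵥ b) = b 0 := by
      intro b
      simp [oiMat, Matrix.mulVec, dotProduct, Fin.sum_univ_two]
    have hS1 : ∀ b : Fin (2*0+2) → F,
        (![0,1] : Fin (2*0+2) → F) ⬝ᵥ (oiMat F 0 2 z *ᵥ b) = -z * b 1 := by
      intro b
      simp [oiMat, Matrix.mulVec, dotProduct, Fin.sum_univ_two]
    let A : OiVertex F (2*0+2) := ⟨Submodule.span F {![1,0]}, spanE0_ne_bot, spanE0_ne_top⟩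
    let P : OiVertex F (2*0+2) := ⟨Submodule.span F {![0,1]}, spanE1_ne_bot, spanE1_ne_top⟩
    let C : OiVertex F (2*0+2) := ⟨Submodule.span F {![1,1]}, spanE01_ne_bot, spanE01_ne_top⟩
    refine not_conn _ A P C ?_ ?_ ?_ ?_
    · intro x hx
      have hb : ∀ b ∈ x.1, b 0 = 0 := by
        intro b hb
        have := hx.2.1 ![1,0] (Submodule.mem_span_singleton_self _) b hb
        rwa [hS0 b] at this
      exact Subtype.ext (span_eq' x.2.1 (le_span_of_coord0 hb))
    · intro x hx
      have hb : ∀ b ∈ x.1, b 1 = 0 := by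
        intro b hb
        have := hx.2.1 ![0,1] (Submodule.mem_span_singleton_self _) b hb
        rw [hS1 b] at this
        rcases mul_eq_zero.mp this with h | h
        · exact absurd (neg_eq_zero.mp h) hz0
        · exact h
      exact Subtype.ext (span_eq' x.2.1 (le_span_of_coord1 hb))
    · exact fun h => spanE01_ne_spanE0 (congrArg Subtype.val h)
    · exact fun h => spanE01_ne_spanE1 (congrArg Subtype.val h)
end

section
/- For every automorphism σ of Oi(n, q) and every vertex X of Oi(n, q) with dim X = 1, the vertex σ(X) also has dimension 1; consequently σ maps the set of 1-dimensional vertices bijectively onto itself. -/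
open Matrix

set_option linter.unusedSectionVars false

section A
variable {F : Type*} [Field F]

lemma oiMat_col (ν δ : ℕ) (hδ : δ ≤ 2) (z : F) (i₀ : Fin (2*ν+δ)) :
    ∃ j : Fin (2*ν+δ), ∃ c : F, (c = 1 ∨ c = -z) ∧
      ∀ i, oiMat F ν δ z i j = if (i : ℕ) = (i₀ : ℕ) then c else 0 := by
  have hi := i₀.isLt
  by_cases h1 : (i₀ : ℕ) < ν
  · refine ⟨⟨(i₀ : ℕ) + ν, by omega⟩, 1, Or.inl rfl, fun i => ?_⟩
    simp only [oiMat, of_apply]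
    split_ifs <;> first | rfl | omega
  · by_cases h2 : (i₀ : ℕ) < 2*ν
    · refine ⟨⟨(i₀ : ℕ) - ν, by omega⟩, 1, Or.inl rfl, fun i => ?_⟩
      simp only [oiMat, of_apply]
      split_ifs <;> first | rfl | omega
    · by_cases h3 : (i₀ : ℕ) = 2*ν
      · refine ⟨i₀, 1, Or.inl rfl, fun i => ?_⟩
        simp only [oiMat, of_apply]
        split_ifs <;> first | rfl | omega
      · refine ⟨i₀, -z, Or.inr rfl, fun i => ?_⟩
        simp only [oiMat, of_apply]
        split_ifs <;> first | rfl | omega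

lemma oiMat_symm (ν δ : ℕ) (z : F) (i j : Fin (2*ν+δ)) :
    oiMat F ν δ z i j = oiMat F ν δ z j i := by
  simp only [oiMat, of_apply]
  split_ifs <;> first | rfl | omega

lemma oiB_isSymm (ν δ : ℕ) (z : F) : (Matrix.toBilin' (oiMat F ν δ z)).IsSymm := by
  refine ⟨fun x y => ?_⟩
  simp only [RingHom.id_apply, Matrix.toBilin'_apply]
  rw [Finset.sum_comm]
  refine Finset.sum_congr rfl fun a _ => Finset.sum_congr rfl fun b _ => ?_
  rw [oiMat_symm]
  ring

lemma oiMat_nondeg (ν δ : ℕ) (hδ : δ ≤ 2) {z : F} (hz : z ≠ 0) :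
    (oiMat F ν δ z).Nondegenerate := by
  suffices hL : (oiMat F ν δ z).SeparatingLeft by
    have hT : (oiMat F ν δ z)ᵀ = oiMat F ν δ z := Matrix.ext fun i j => oiMat_symm ν δ z j i
    have hR := (Matrix.separatingRight_transpose_iff (M := oiMat F ν δ z)).2 hL
    exact ⟨hL, hT ▸ hR⟩
  rw [Matrix.separatingLeft_def]
  intro v hv
  funext i₀
  obtain ⟨j, c, hc, hcol⟩ := oiMat_col ν δ hδ z i₀
  have h := hv (Pi.single j 1)
  have hmv : ∀ i, ((oiMat F ν δ z) *ᵥ Pi.single j 1) i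
      = if (i : ℕ) = (i₀ : ℕ) then c else 0 := by
    intro i
    simp [mulVec_single, hcol i]
  rw [dotProduct] at h
  simp only [hmv] at h
  rw [Finset.sum_eq_single i₀ (fun b _ hb => by
        rw [if_neg (fun hh => hb (Fin.val_inj.1 hh)), mul_zero])
      (fun hb => absurd (Finset.mem_univ i₀) hb)] at h
  rw [if_pos rfl] at h
  have hc0 : c ≠ 0 := by
    rcases hc with rfl | rfl
    · exact one_ne_zero
    · exact neg_ne_zero.2 hz
  simpa [hc0] using h
end A


section B
variable (F : Type*) [Field F] [Fintype F]

noncomputable def subCount (m : ℕ) : ℕ := Nat.card (Submodule F (Fin m → F))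

variable {F}

lemma card_le_submodules {n : ℕ} (W : Submodule F (Fin n → F)) :
    Nat.card {B : Submodule F (Fin n → F) // B ≤ W} = subCount F (Module.finrank F W) := by
  have e2 : (W : Type _) ≃ₗ[F] (Fin (Module.finrank F W) → F) :=
    LinearEquiv.ofFinrankEq _ _ (by rw [Module.finrank_fin_fun])
  calc Nat.card {B : Submodule F (Fin n → F) // B ≤ W}
      = Nat.card (Submodule F W) :=
        Nat.card_congr (Submodule.MapSubtype.orderIso W).symm.toEquiv
    _ = Nat.card (Submodule F (Fin (Module.finrank F W) → F)) :=
        Nat.card_congr (Submodule.orderIsoMapComap e2).toEquiv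
    _ = _ := rfl

/-- extension by zero -/
def extLin (m : ℕ) : (Fin m → F) →ₗ[F] (Fin (m+1) → F) where
  toFun x := fun j => if h : (j : ℕ) < m then x ⟨j, h⟩ else 0
  map_add' x y := by funext j; by_cases h : (j : ℕ) < m <;> simp [h]
  map_smul' c x := by funext j; by_cases h : (j : ℕ) < m <;> simp [h]

lemma extLin_injective (m : ℕ) : Function.Injective (extLin (F := F) m) := by
  intro x y h
  funext i
  have := congrFun h (Fin.castSucc i)
  simpa [extLin, i.isLt, Fin.castSucc] using this

lemma extLin_last {m : ℕ} (x : Fin m → F) : extLin m x (Fin.last m) = 0 := by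
  simp [extLin, Fin.last]

lemma subCount_mono : Monotone (subCount F) := by
  refine monotone_nat_of_le_succ fun m => ?_
  exact Nat.card_le_card_of_injective _
    (Submodule.map_injective_of_injective (extLin_injective (F := F) m))

lemma subCount_succ {m : ℕ} (hm : 1 ≤ m) : subCount F m + 3 ≤ subCount F (m+1) := by
  classical
  set u : Fin (m+1) → F := Pi.single (Fin.last m) 1 with hu
  set w : Fin (m+1) → F := Pi.single (⟨0, by omega⟩ : Fin (m+1)) 1 with hw
  have hlast0 : (⟨0, by omega⟩ : Fin (m+1)) ≠ Fin.last m := by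
    simp [Fin.ext_iff, Fin.last]; omega
  have hul : u (Fin.last m) = 1 := Pi.single_eq_same _ _
  have hu0 : u ⟨0, by omega⟩ = 0 := Pi.single_eq_of_ne hlast0 _
  have hwl : w (Fin.last m) = 0 := Pi.single_eq_of_ne hlast0.symm _
  have hw0 : w ⟨0, by omega⟩ = 1 := Pi.single_eq_same _ _
  set T : Fin 3 → Submodule F (Fin (m+1) → F) :=
    ![⊤, Submodule.span F {u}, Submodule.span F {u + w}] with hT
  -- every element of T contains a vector with nonzero last coordinate
  have hTmem : ∀ k : Fin 3, ∃ x ∈ T k, x (Fin.last m) ≠ 0 := by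
    intro k
    fin_cases k
    · exact ⟨u, Submodule.mem_top, by rw [hul]; exact one_ne_zero⟩
    · exact ⟨u, Submodule.mem_span_singleton_self u, by rw [hul]; exact one_ne_zero⟩
    · refine ⟨u + w, Submodule.mem_span_singleton_self _, ?_⟩
      simp [hul, hwl]
  have hTne : ∀ (p : Submodule F (Fin m → F)) (k : Fin 3),
      Submodule.map (extLin m) p ≠ T k := by
    intro p k hpk
    obtain ⟨x, hx, hx0⟩ := hTmem k
    rw [← hpk] at hx
    obtain ⟨y, -, rfl⟩ := hx
    exact hx0 (extLin_last y)
  have hn1 : w ∉ Submodule.span F {u} := by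
    rw [Submodule.mem_span_singleton]
    rintro ⟨c, hc⟩
    have := congrFun hc ⟨0, by omega⟩
    rw [Pi.smul_apply, hu0, hw0, smul_zero] at this
    exact one_ne_zero this.symm
  have hn2 : w ∉ Submodule.span F {u + w} := by
    rw [Submodule.mem_span_singleton]
    rintro ⟨c, hc⟩
    have h1 := congrFun hc (Fin.last m)
    rw [Pi.smul_apply, Pi.add_apply, hul, hwl, add_zero, smul_eq_mul, mul_one] at h1
    subst h1
    have h2 := congrFun hc ⟨0, by omega⟩
    rw [Pi.smul_apply, hw0, zero_smul] at h2
    exact one_ne_zero h2.symm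
  have hn3 : u + w ∉ Submodule.span F {u} := by
    rw [Submodule.mem_span_singleton]
    rintro ⟨c, hc⟩
    have := congrFun hc ⟨0, by omega⟩
    rw [Pi.smul_apply, hu0, smul_zero, Pi.add_apply, hu0, hw0, zero_add] at this
    exact one_ne_zero this.symm
  have hTinj : Function.Injective T := by
    have e01 : (⊤ : Submodule F (Fin (m+1) → F)) ≠ Submodule.span F {u} := by
      intro h
      exact hn1 (h ▸ Submodule.mem_top)
    have e02 : (⊤ : Submodule F (Fin (m+1) → F)) ≠ Submodule.span F {u + w} := by
      intro h
      exact hn2 (h ▸ Submodule.mem_top)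
    have e12 : Submodule.span F {u} ≠ Submodule.span F {u + w} := by
      intro h
      exact hn3 (h ▸ Submodule.mem_span_singleton_self (u + w))
    intro a b hab
    fin_cases a <;> fin_cases b <;>
      simp_all [hT, e01, e02, e12, e01.symm, e02.symm, e12.symm]
  have hf : Function.Injective
      (Sum.elim (fun p : Submodule F (Fin m → F) => Submodule.map (extLin m) p) T) := by
    intro a b hab
    cases a with
    | inl p =>
      cases b with
      | inl q => exact congrArg Sum.inl (Submodule.map_injective_of_injective (extLin_injective (F := F) m) hab)
      | inr k => exact absurd hab (hTne p k)
    | inr k =>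
      cases b with
      | inl q => exact absurd hab.symm (hTne q k)
      | inr k' => exact congrArg Sum.inr (hTinj hab)
  have hcard := Nat.card_le_card_of_injective _ hf
  rw [Nat.card_sum, Nat.card_eq_fintype_card (α := Fin 3), Fintype.card_fin] at hcard
  unfold subCount
  exact hcard
end B


section C
variable {F : Type*} [Field F] [Fintype F]

lemma dim_one_iff_deg {n : ℕ} (hn3 : 3 ≤ n) (S : Matrix (Fin n) (Fin n) F)
    (hsym : (Matrix.toBilin' S).IsSymm) (hnd : S.Nondegenerate) (X : OiVertex F n) :
    Module.finrank F X.1 = 1 ↔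
      subCount F (n-2) < Nat.card ((oiGraph F n S).neighborSet X) := by
  classical
  set B := Matrix.toBilin' S with hB
  have hndB : B.Nondegenerate := hnd.toBilin'
  have hrefl : B.IsRefl := hsym.isRefl
  have hVr : Module.finrank F (Fin n → F) = n := Module.finrank_fin_fun F
  set P := B.orthogonal X.1 with hP
  have frX1 : 1 ≤ Module.finrank F X.1 := by
    rcases Nat.eq_zero_or_pos (Module.finrank F X.1) with h | h
    · exact absurd (Submodule.finrank_eq_zero.1 h) X.2.1
    · exact h
  have frXn : Module.finrank F X.1 < n := by
    conv_rhs => rw [← hVr]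
    exact Submodule.finrank_lt X.2.2
  have frP : Module.finrank F P = n - Module.finrank F X.1 := by
    rw [hP, LinearMap.BilinForm.finrank_orthogonal hndB, hVr]
  have hBS : ∀ a b : Fin n → F, B a b = a ⬝ᵥ S *ᵥ b := fun a b =>
    Matrix.toBilin'_apply' S a b
  -- upper bound on the degree
  have hup : Nat.card ((oiGraph F n S).neighborSet X)
      ≤ subCount F (n - Module.finrank F X.1) := by
    rw [← frP, ← card_le_submodules P]
    have hle : ∀ Y : (oiGraph F n S).neighborSet X, Y.1.1 ≤ P := by
      intro Y b hb
      have hadj : (oiGraph F n S).Adj X Y.1 := Y.2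
      refine LinearMap.BilinForm.mem_orthogonal_iff.2 fun a ha => ?_
      show B a b = 0
      rw [hBS]
      exact (show _ ∧ _ ∧ _ from hadj).2.1 a ha b hb
    exact Nat.card_le_card_of_injective
      (fun Y => (⟨Y.1.1, hle Y⟩ : {C : Submodule F (Fin n → F) // C ≤ P}))
      (fun Y1 Y2 h => by
        have h' := congrArg (Subtype.val (p := fun C : Submodule F (Fin n → F) => C ≤ P)) h
        exact Subtype.ext (Subtype.ext h'))
  constructor
  · intro hd1
    have hPfr : Module.finrank F P = n - 1 := by rw [frP, hd1]
    have hPne : P ≠ ⊤ := by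
      intro h
      rw [h, finrank_top, hVr] at hPfr
      omega
    set s : Set (Submodule F (Fin n → F)) := {C | C ≤ P} with hsdef
    set t : Set (Submodule F (Fin n → F)) := s \ {⊥, X.1} with htdef
    have key : ∀ C : t, ∃ Y : ((oiGraph F n S).neighborSet X : Set (OiVertex F n)),
        Y.1.1 = C.1 := by
      intro C
      obtain ⟨hCP, hCnot⟩ := C.2
      have hCbot : C.1 ≠ ⊥ := fun h => hCnot (Set.mem_insert_iff.2 (Or.inl h))
      have hCX : C.1 ≠ X.1 := fun h => hCnot (Set.mem_insert_iff.2 (Or.inr h))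
      have hCtop : C.1 ≠ ⊤ := by
        intro h
        exact hPne (top_le_iff.1 (h ▸ hCP))
      have hmemP : ∀ b ∈ C.1, b ∈ P := fun b hb => hCP hb
      refine ⟨⟨⟨C.1, hCbot, hCtop⟩, ?_⟩, rfl⟩
      rw [SimpleGraph.mem_neighborSet]
      show _ ∧ _ ∧ _
      refine ⟨fun h => hCX (congrArg Subtype.val h).symm, ?_, ?_⟩
      · intro a ha b hb
        rw [← hBS]
        exact hmemP b hb a ha
      · intro a ha b hb
        rw [← hBS]
        have h1 : B b a = 0 := hmemP a ha b hb
        have h2 := hsym.eq a b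
        rw [h2, h1]
    choose f hf using key
    have hfinj : Function.Injective f := by
      intro C1 C2 h
      apply Subtype.ext
      rw [← hf C1, ← hf C2, h]
    have hcard1 : t.ncard ≤ Nat.card ((oiGraph F n S).neighborSet X) := by
      rw [← Nat.card_coe_set_eq]
      exact Nat.card_le_card_of_injective f hfinj
    have hcard2 : Nat.card {C : Submodule F (Fin n → F) // C ≤ P} = s.ncard :=
      Nat.card_coe_set_eq s
    have hcard3 : s.ncard = subCount F (n - 1) := by
      rw [← hcard2, card_le_submodules P, hPfr]
    have hsub : s ⊆ t ∪ {⊥, X.1} := by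
      intro C hC
      by_cases h : C ∈ ({⊥, X.1} : Set (Submodule F (Fin n → F)))
      · exact Set.mem_union_right _ h
      · exact Set.mem_union_left _ ⟨hC, h⟩
    have hcard4 : s.ncard ≤ t.ncard + 2 := by
      calc s.ncard ≤ (t ∪ {⊥, X.1}).ncard := Set.ncard_le_ncard hsub (Set.toFinite _)
        _ ≤ t.ncard + ({⊥, X.1} : Set (Submodule F (Fin n → F))).ncard :=
            Set.ncard_union_le _ _
        _ ≤ t.ncard + 2 := by
            have h5 : ({⊥, X.1} : Set (Submodule F (Fin n → F))).ncard ≤ 2 := by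
              calc (insert ⊥ {X.1} : Set (Submodule F (Fin n → F))).ncard
                  ≤ ({X.1} : Set (Submodule F (Fin n → F))).ncard + 1 :=
                    Set.ncard_insert_le _ _
                _ = 2 := by rw [Set.ncard_singleton]
            omega
    have hgap : subCount F (n-2) + 3 ≤ subCount F (n-1) := by
      have h6 := subCount_succ (F := F) (m := n-2) (by omega)
      have he : n - 2 + 1 = n - 1 := by omega
      rwa [he] at h6
    omega
  · intro hlt
    by_contra hne
    have hd2 : 2 ≤ Module.finrank F X.1 := by omega
    have h7 := le_trans hup (subCount_mono (by omega : n - Module.finrank F X.1 ≤ n - 2))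
    omega
end C




/-- Every automorphism of `Oi(n, q)` maps 1-dimensional vertices to 1-dimensional vertices,
and hence maps the set of 1-dimensional vertices bijectively onto itself. -/
theorem stmt3 (F : Type*) [Field F] [Fintype F] (hF : ringChar F ≠ 2)
    (ν δ : ℕ) (hδ : δ ≤ 2) (hn : 2 ≤ 2*ν + δ) (z : F) (hz : ¬ IsSquare z)
    (σ : (oiGraph F (2*ν+δ) (oiMat F ν δ z)) ≃g (oiGraph F (2*ν+δ) (oiMat F ν δ z))) :
    (∀ X : OiVertex F (2*ν+δ),
        Module.finrank F X.1 = 1 → Module.finrank F (σ X).1 = 1) ∧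
      Set.BijOn (fun X => σ X)
        {X : OiVertex F (2*ν+δ) | Module.finrank F X.1 = 1}
        {X : OiVertex F (2*ν+δ) | Module.finrank F X.1 = 1} := by
  classical
  have hz0 : z ≠ 0 := by
    intro h
    exact hz ⟨0, by rw [h, mul_zero]⟩
  have hsym : (Matrix.toBilin' (oiMat F ν δ z)).IsSymm := oiB_isSymm ν δ z
  have hnd : (oiMat F ν δ z).Nondegenerate := oiMat_nondeg ν δ hδ hz0
  have key : ∀ τ : (oiGraph F (2*ν+δ) (oiMat F ν δ z)) ≃g (oiGraph F (2*ν+δ) (oiMat F ν δ z)),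
      ∀ X : OiVertex F (2*ν+δ), Module.finrank F X.1 = 1 → Module.finrank F (τ X).1 = 1 := by
    intro τ X hX
    by_cases h3 : 3 ≤ 2*ν+δ
    · rw [dim_one_iff_deg h3 _ hsym hnd] at hX ⊢
      have hdeg : Nat.card ((oiGraph F (2*ν+δ) (oiMat F ν δ z)).neighborSet X)
          = Nat.card ((oiGraph F (2*ν+δ) (oiMat F ν δ z)).neighborSet (τ X)) :=
        Nat.card_congr (τ.mapNeighborSet X)
      omega
    · have hVr : Module.finrank F (Fin (2*ν+δ) → F) = 2*ν+δ := Module.finrank_fin_fun F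
      have h1 : Module.finrank F (τ X).1 ≠ 0 := fun h =>
        (τ X).2.1 (Submodule.finrank_eq_zero.1 h)
      have h2 : Module.finrank F (τ X).1 < 2*ν+δ := by
        conv_rhs => rw [← hVr]
        exact Submodule.finrank_lt (τ X).2.2
      omega
  exact ⟨key σ, fun X hX => key σ X hX, fun X hX Y hY h => σ.injective h,
    fun Y hY => ⟨σ.symm Y, key σ.symm Y hY, σ.apply_symm_apply Y⟩⟩
end

section
/- For T₁, T₂ in the orthogonal group O_n(F), one has W·T₁ = W·T₂ for every nontrivial subspace W of F^n if and only if T₁ = T₂ or T₁ = −T₂. -/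
open Matrix

private lemma oiMat_sum_eq {F : Type*} [Field F] {ν δ : ℕ} (z : F)
    (v : Fin (2*ν+δ) → F) (j i : Fin (2*ν+δ))
    (h0 : ∀ k : Fin (2*ν+δ), k ≠ i → oiMat F ν δ z k j = 0) :
    ∑ k, v k * oiMat F ν δ z k j = v i * oiMat F ν δ z i j :=
  Finset.sum_eq_single i (fun b _ hb => by rw [h0 b hb, mul_zero])
    (fun h => absurd (Finset.mem_univ _) h)

private lemma oiMat_ker {F : Type*} [Field F] {ν δ : ℕ} (hδ : δ ≤ 2) {z : F} (hz : z ≠ 0)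
    (v : Fin (2*ν+δ) → F) (h : v ᵥ* oiMat F ν δ z = 0) : v = 0 := by
  have key : ∀ j : Fin (2*ν+δ), ∑ k, v k * oiMat F ν δ z k j = 0 := by
    intro j
    have := congrFun h j
    simpa [Matrix.vecMul, dotProduct] using this
  funext i
  have hi := i.isLt
  show v i = 0
  by_cases h1 : (i : ℕ) < ν
  · have hb : (i : ℕ) + ν < 2*ν+δ := by omega
    set j : Fin (2*ν+δ) := ⟨(i : ℕ) + ν, hb⟩ with hjdef
    have hj : (j : ℕ) = (i : ℕ) + ν := rfl
    have hzero : ∀ k : Fin (2*ν+δ), k ≠ i → oiMat F ν δ z k j = 0 := by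
      intro k hk
      have hk' : (k : ℕ) ≠ (i : ℕ) := fun hh => hk (Fin.ext hh)
      simp only [oiMat, Matrix.of_apply, hj]
      split_ifs <;> first | rfl | (exfalso; ((try simp only [true_and, and_true] at *) <;> omega))
    have hval : oiMat F ν δ z i j = 1 := by
      simp only [oiMat, Matrix.of_apply, hj]
      split_ifs <;> first | rfl | (exfalso; ((try simp only [true_and, and_true] at *) <;> omega))
    have hk := key j
    rwa [oiMat_sum_eq z v j i hzero, hval, mul_one] at hk
  · by_cases h2 : (i : ℕ) < 2*ν
    · have hb : (i : ℕ) - ν < 2*ν+δ := by omega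
      set j : Fin (2*ν+δ) := ⟨(i : ℕ) - ν, hb⟩ with hjdef
      have hj : (j : ℕ) = (i : ℕ) - ν := rfl
      have hzero : ∀ k : Fin (2*ν+δ), k ≠ i → oiMat F ν δ z k j = 0 := by
        intro k hk
        have hk' : (k : ℕ) ≠ (i : ℕ) := fun hh => hk (Fin.ext hh)
        simp only [oiMat, Matrix.of_apply, hj]
        split_ifs <;> first | rfl | (exfalso; ((try simp only [true_and, and_true] at *) <;> omega))
      have hval : oiMat F ν δ z i j = 1 := by
        simp only [oiMat, Matrix.of_apply, hj]
        split_ifs <;> first | rfl | (exfalso; ((try simp only [true_and, and_true] at *) <;> omega))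
      have hk := key j
      rwa [oiMat_sum_eq z v j i hzero, hval, mul_one] at hk
    · by_cases h3 : (i : ℕ) = 2*ν
      · have hzero : ∀ k : Fin (2*ν+δ), k ≠ i → oiMat F ν δ z k i = 0 := by
          intro k hk
          have hk' : (k : ℕ) ≠ (i : ℕ) := fun hh => hk (Fin.ext hh)
          simp only [oiMat, Matrix.of_apply]
          split_ifs <;> first | rfl | (exfalso; ((try simp only [true_and, and_true] at *) <;> omega))
        have hval : oiMat F ν δ z i i = 1 := by
          simp only [oiMat, Matrix.of_apply]
          split_ifs <;> first | rfl | (exfalso; ((try simp only [true_and, and_true] at *) <;> omega))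
        have hk := key i
        rwa [oiMat_sum_eq z v i i hzero, hval, mul_one] at hk
      · have h4 : (i : ℕ) = 2*ν + 1 := by omega
        have hzero : ∀ k : Fin (2*ν+δ), k ≠ i → oiMat F ν δ z k i = 0 := by
          intro k hk
          have hk' : (k : ℕ) ≠ (i : ℕ) := fun hh => hk (Fin.ext hh)
          simp only [oiMat, Matrix.of_apply]
          split_ifs <;> first | rfl | (exfalso; ((try simp only [true_and, and_true] at *) <;> omega))
        have hval : oiMat F ν δ z i i = -z := by
          simp only [oiMat, Matrix.of_apply]
          split_ifs <;> first | rfl | (exfalso; ((try simp only [true_and, and_true] at *) <;> omega))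
        have hk := key i
        rw [oiMat_sum_eq z v i i hzero, hval] at hk
        rcases mul_eq_zero.1 hk with h | h
        · exact h
        · exact absurd (neg_eq_zero.1 h) hz

private lemma oiMat_exists_one (F : Type*) [Field F] {ν δ : ℕ} (hn : 2 ≤ 2*ν+δ) (z : F) :
    ∃ i j : Fin (2*ν+δ), oiMat F ν δ z i j = 1 := by
  rcases Nat.eq_zero_or_pos ν with hν | hν
  · refine ⟨⟨0, by omega⟩, ⟨0, by omega⟩, ?_⟩
    have h0 : ((⟨0, by omega⟩ : Fin (2*ν+δ)) : ℕ) = 0 := rfl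
    simp only [oiMat, Matrix.of_apply, h0]
    split_ifs <;> first | rfl | (exfalso; ((try simp only [true_and, and_true] at *) <;> omega))
  · refine ⟨⟨0, by omega⟩, ⟨ν, by omega⟩, ?_⟩
    have h0 : ((⟨0, by omega⟩ : Fin (2*ν+δ)) : ℕ) = 0 := rfl
    have h1 : ((⟨ν, by omega⟩ : Fin (2*ν+δ)) : ℕ) = ν := rfl
    simp only [oiMat, Matrix.of_apply, h0, h1]
    split_ifs <;> first | rfl | (exfalso; ((try simp only [true_and, and_true] at *) <;> omega))

/-- For `T₁, T₂` in the orthogonal group `O_n(F)`, `W·T₁ = W·T₂` for every nontrivial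
subspace `W` of `F^n` iff `T₁ = T₂` or `T₁ = -T₂`. -/
theorem stmt5 (F : Type*) [Field F] [Fintype F] (hF : ringChar F ≠ 2)
    (ν δ : ℕ) (hδ : δ ≤ 2) (hn : 2 ≤ 2*ν + δ) (z : F) (hz : ¬ IsSquare z)
    (T₁ T₂ : Matrix (Fin (2*ν+δ)) (Fin (2*ν+δ)) F)
    (hT₁ : T₁ * oiMat F ν δ z * T₁ᵀ = oiMat F ν δ z)
    (hT₂ : T₂ * oiMat F ν δ z * T₂ᵀ = oiMat F ν δ z) :
    (∀ W : Submodule F (Fin (2*ν+δ) → F), W ≠ ⊥ → W ≠ ⊤ →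
        W.map (Matrix.vecMulLinear T₁) = W.map (Matrix.vecMulLinear T₂)) ↔
      (T₁ = T₂ ∨ T₁ = -T₂) := by
  constructor
  · intro hW
    have hz0 : z ≠ 0 := fun h0 => hz (h0 ▸ ⟨0, (mul_zero 0).symm⟩)
    have hker : ∀ v : Fin (2*ν+δ) → F, v ᵥ* T₂ = 0 → v = 0 := by
      intro v hv
      refine oiMat_ker hδ hz0 v ?_
      calc v ᵥ* oiMat F ν δ z = v ᵥ* (T₂ * oiMat F ν δ z * T₂ᵀ) := by rw [hT₂]
        _ = 0 := by
            rw [← Matrix.vecMul_vecMul, ← Matrix.vecMul_vecMul, hv, Matrix.zero_vecMul,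
              Matrix.zero_vecMul]
    have hmem : ∀ v : Fin (2*ν+δ) → F, v ᵥ* T₁ ∈ Submodule.span F {v ᵥ* T₂} := by
      intro v
      rcases eq_or_ne v 0 with rfl | hv
      · simp [Matrix.zero_vecMul]
      have hbot : Submodule.span F {v} ≠ ⊥ := by
        simpa [Submodule.span_singleton_eq_bot] using hv
      have htop : Submodule.span F {v} ≠ ⊤ := by
        intro htop
        have h1 : Module.finrank F (Submodule.span F {v}) = 1 :=
          finrank_span_singleton hv
        rw [htop, finrank_top] at h1
        rw [Module.finrank_fin_fun] at h1
        omega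
      have hmap := hW _ hbot htop
      rw [Submodule.map_span, Submodule.map_span, Set.image_singleton, Set.image_singleton,
        Matrix.vecMulLinear_apply, Matrix.vecMulLinear_apply] at hmap
      exact hmap ▸ Submodule.mem_span_singleton_self _
    have hc : ∀ v : Fin (2*ν+δ) → F, ∃ c : F, v ᵥ* T₁ = c • (v ᵥ* T₂) :=
      fun v => (Submodule.mem_span_singleton.1 (hmem v)).imp fun c hc => hc.symm
    set i0 : Fin (2*ν+δ) := ⟨0, by omega⟩ with hi0
    obtain ⟨c, hc0⟩ := hc (Pi.single i0 1)
    have hall : ∀ i : Fin (2*ν+δ), Pi.single i 1 ᵥ* T₁ = c • (Pi.single i 1 ᵥ* T₂) := by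
      intro i
      rcases eq_or_ne i i0 with rfl | hi
      · exact hc0
      obtain ⟨ci, hci⟩ := hc (Pi.single i 1)
      obtain ⟨d, hd⟩ := hc (Pi.single i0 1 + Pi.single i 1)
      rw [Matrix.add_vecMul, Matrix.add_vecMul, hc0, hci, smul_add] at hd
      have hkey : ((c - d) • (Pi.single i0 1 : Fin (2*ν+δ) → F) + (ci - d) • (Pi.single i 1 : Fin (2*ν+δ) → F)) ᵥ* T₂ = 0 := by
        rw [Matrix.add_vecMul, Matrix.smul_vecMul, Matrix.smul_vecMul, sub_smul, sub_smul,
          sub_add_sub_comm, hd, sub_self]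
      have hzero := hker _ hkey
      have hcid : ci = d := by
        have hvi := congrFun hzero i
        simp only [Pi.add_apply, Pi.smul_apply, Pi.single_eq_same, smul_eq_mul, mul_one,
          Pi.single_eq_of_ne hi, mul_zero, zero_add, add_zero, Pi.zero_apply] at hvi
        exact sub_eq_zero.1 hvi
      have hcd : c = d := by
        have hvi0 := congrFun hzero i0
        simp only [Pi.add_apply, Pi.smul_apply, Pi.single_eq_same, smul_eq_mul, mul_one,
          Pi.single_eq_of_ne (Ne.symm hi), mul_zero, zero_add, add_zero, Pi.zero_apply] at hvi0
        exact sub_eq_zero.1 hvi0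
      rw [hci, hcid, ← hcd]
    have hT : T₁ = c • T₂ := by
      ext i j
      have h := hall i
      rw [Matrix.single_one_vecMul, Matrix.single_one_vecMul] at h
      have := congrFun h j
      simpa [Matrix.smul_apply, smul_eq_mul] using this
    have hsq : c * c = 1 := by
      have h2 : (c * c) • oiMat F ν δ z = oiMat F ν δ z := by
        calc (c*c) • oiMat F ν δ z = (c*c) • (T₂ * oiMat F ν δ z * T₂ᵀ) := by rw [hT₂]
          _ = (c • T₂) * oiMat F ν δ z * (c • T₂)ᵀ := by
              rw [Matrix.transpose_smul, Matrix.smul_mul, Matrix.smul_mul, Matrix.mul_smul,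
                smul_smul]
          _ = oiMat F ν δ z := by rw [← hT, hT₁]
      obtain ⟨a, b, hab⟩ := oiMat_exists_one F hn z
      have := congrFun (congrFun h2 a) b
      rw [Matrix.smul_apply, hab, smul_eq_mul, mul_one] at this
      exact this
    rcases mul_self_eq_one_iff.1 hsq with rfl | rfl
    · left; rw [hT, one_smul]
    · right; rw [hT, neg_one_smul]
  · rintro (rfl | rfl) W hbot htop
    · rfl
    · have hneg : (-T₂).vecMulLinear = -(T₂.vecMulLinear) := by
        apply LinearMap.ext
        intro v
        simp [Matrix.vecMulLinear_apply, Matrix.vecMul_neg]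
      rw [hneg, Submodule.map_neg]
end

section
/- Let ν ≥ 2 and δ = 0, so n = 2ν. Every automorphism τ of Oi(2ν, q) can be written as τ = σ_T ∘ ρ, where T ∈ O_{2ν}(F), σ_T is the automorphism W ↦ W·T, and ρ is an automorphism of Oi(2ν, q) satisfying ρ([e_i]) = [e_i] and ρ([f_i]) = [f_i] for all 1 ≤ i ≤ ν. -/
open Matrix

open Module Submodule


namespace Oi7

variable {F : Type*} [Field F] {n : ℕ} {S : Matrix (Fin n) (Fin n) F}

lemma bsym (hS : Sᵀ = S) (x y : Fin n → F) : x ⬝ᵥ S *ᵥ y = y ⬝ᵥ S *ᵥ x := by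
  rw [Matrix.dotProduct_mulVec, ← Matrix.mulVec_transpose, hS, dotProduct_comm]

noncomputable def Bl (S : Matrix (Fin n) (Fin n) F) : LinearMap.BilinForm F (Fin n → F) :=
  Matrix.toLinearMap₂' F S

lemma Bl_apply (x y : Fin n → F) : Bl S x y = x ⬝ᵥ S *ᵥ y :=
  Matrix.toLinearMap₂'_apply' S x y

noncomputable def prp (S : Matrix (Fin n) (Fin n) F) (W : Submodule F (Fin n → F)) :
    Submodule F (Fin n → F) :=
  LinearMap.BilinForm.orthogonal (Bl S) W

lemma mem_prp {W : Submodule F (Fin n → F)} {x : Fin n → F} :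
    x ∈ prp S W ↔ ∀ w ∈ W, w ⬝ᵥ S *ᵥ x = 0 := by
  simp only [prp, LinearMap.BilinForm.mem_orthogonal_iff, LinearMap.BilinForm.IsOrtho, Bl_apply]

lemma hrefl (hS : Sᵀ = S) : (Bl (n := n) S).IsRefl := by
  intro x y h
  rw [Bl_apply] at h ⊢
  rw [bsym hS]; exact h

lemma hnd (hdet : IsUnit S.det) : (Bl (n := n) S).Nondegenerate := by
  exact Matrix.Nondegenerate.toLinearMap₂' (Matrix.nondegenerate_of_det_ne_zero hdet.ne_zero)

lemma prp_prp (hS : Sᵀ = S) (hdet : IsUnit S.det) (W : Submodule F (Fin n → F)) :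
    prp S (prp S W) = W :=
  LinearMap.BilinForm.orthogonal_orthogonal (hnd hdet) (hrefl hS) W

lemma prp_le_prp {U W : Submodule F (Fin n → F)} (h : U ≤ W) : prp S W ≤ prp S U :=
  LinearMap.BilinForm.orthogonal_le h

lemma finrank_prp (hS : Sᵀ = S) (hdet : IsUnit S.det) (W : Submodule F (Fin n → F)) :
    finrank F (prp S W) = n - finrank F W := by
  rw [prp, LinearMap.BilinForm.finrank_orthogonal (hnd hdet), Module.finrank_fin_fun]

lemma le_prp_comm (hS : Sᵀ = S) {U W : Submodule F (Fin n → F)} :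
    U ≤ prp S W ↔ W ≤ prp S U := by
  constructor <;>
  · intro h w hw
    rw [mem_prp]
    intro u hu
    have := mem_prp.1 (h hu) w hw
    rw [bsym hS]; exact this

lemma adj_iff (hS : Sᵀ = S) {A B : OiVertex F n} :
    (oiGraph F n S).Adj A B ↔ A ≠ B ∧ A.1 ≤ prp S B.1 := by
  constructor
  · rintro ⟨h1, _h2, h3⟩
    exact ⟨h1, fun x hx => mem_prp.2 fun w hw => h3 w hw x hx⟩
  · rintro ⟨h1, h2⟩
    refine ⟨h1, fun a ha b hb => ?_, fun a ha b hb => mem_prp.1 (h2 hb) a ha⟩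
    rw [bsym hS]
    exact mem_prp.1 (h2 ha) b hb

end Oi7

namespace Oi7

variable {F : Type*} [Field F] {n : ℕ} {S : Matrix (Fin n) (Fin n) F}

lemma frV : finrank F (Fin n → F) = n := Module.finrank_fin_fun (R := F)

lemma finrank_pos_of_vertex (A : OiVertex F n) : 1 ≤ finrank F A.1 :=
  Nat.one_le_iff_ne_zero.2 fun h => A.2.1 (Submodule.finrank_eq_zero.1 h)

lemma finrank_lt_of_vertex (A : OiVertex F n) : finrank F A.1 < n := by
  have := Submodule.finrank_lt (K := F) (V := Fin n → F) A.2.2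
  rwa [frV] at this

lemma eq_top_of_finrank_n {W : Submodule F (Fin n → F)} (h : finrank F W = n) : W = ⊤ := by
  apply Submodule.eq_top_of_finrank_eq
  rw [h, frV]

/-- the span of a nonzero vector as a vertex -/
def lineV (hn : 2 ≤ n) (v : Fin n → F) (hv : v ≠ 0) : OiVertex F n :=
  ⟨Submodule.span F {v}, by
    constructor
    · exact fun h => hv (Submodule.span_singleton_eq_bot.1 h)
    · intro h
      have h1 : finrank F (Submodule.span F {v}) = 1 := finrank_span_singleton hv
      rw [h, finrank_top, frV] at h1
      omega⟩

lemma lineV_coe (hn : 2 ≤ n) (v : Fin n → F) (hv : v ≠ 0) :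
    (lineV hn v hv).1 = Submodule.span F {v} := rfl

/-- `prp` of a vertex is a vertex -/
noncomputable def prpV (hS : Sᵀ = S) (hdet : IsUnit S.det) (A : OiVertex F n) : OiVertex F n :=
  ⟨prp S A.1, by
    have h1 := finrank_prp hS hdet A.1
    have h2 := finrank_pos_of_vertex A
    have h3 := finrank_lt_of_vertex A
    constructor
    · intro h
      rw [h, finrank_bot] at h1
      omega
    · intro h
      rw [h, finrank_top, frV] at h1
      omega⟩

def Pre (S : Matrix (Fin n) (Fin n) F) (A B : OiVertex F n) : Prop :=
  ∀ W, (oiGraph F n S).Adj W B → (oiGraph F n S).Adj W A ∨ W = A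

lemma pre_of_le (hS : Sᵀ = S) {A B : OiVertex F n} (h : A.1 ≤ B.1) : Pre S A B := by
  intro W hWB
  by_cases hWA : W = A
  · exact Or.inr hWA
  · left
    rw [adj_iff hS] at hWB ⊢
    exact ⟨hWA, hWB.2.trans (prp_le_prp h)⟩

lemma pre_imp (hS : Sᵀ = S) (hdet : IsUnit S.det) (hn : 4 ≤ n) {A B : OiVertex F n}
    (h : Pre S A B) : A.1 ≤ B.1 ∨ B.1 = prp S A.1 := by
  by_cases hle : prp S B.1 ≤ prp S A.1
  · left
    have := prp_le_prp (S := S) hle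
    rwa [prp_prp hS hdet, prp_prp hS hdet] at this
  · obtain ⟨v, hvB, hvA⟩ := SetLike.not_le_iff_exists.1 hle
    have hv0 : v ≠ 0 := fun h0 => hvA (h0 ▸ (prp S A.1).zero_mem)
    by_cases h2 : prp S B.1 = A.1
    · right
      rw [← h2, prp_prp hS hdet]
    by_cases h3 : prp S B.1 = B.1
    · -- B is Lagrangian
      have hdB : 2 ≤ finrank F B.1 := by
        have h1 := finrank_prp hS hdet B.1
        rw [h3] at h1
        have h4 := finrank_lt_of_vertex B
        omega
      by_cases h4 : Submodule.span F {v} = A.1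
      · left
        rw [← h4, Submodule.span_le, Set.singleton_subset_iff]
        exact h3 ▸ hvB
      · exfalso
        set W : OiVertex F n := lineV (by omega) v hv0 with hW
        have hadj : (oiGraph F n S).Adj W B := by
          rw [adj_iff hS]
          constructor
          · intro hEq
            have h5 : finrank F W.1 = 1 := finrank_span_singleton hv0
            have h6 : finrank F W.1 = finrank F B.1 := by rw [hEq]
            omega
          · rw [hW, lineV_coe, Submodule.span_le, Set.singleton_subset_iff]
            exact hvB
        rcases h W hadj with hWA | hWA
        · rw [adj_iff hS] at hWA
          exact hvA (hWA.2 (Submodule.mem_span_singleton_self v))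
        · exact h4 (congrArg Subtype.val hWA)
    · -- generic case
      exfalso
      set W : OiVertex F n := prpV hS hdet B with hW
      have hadj : (oiGraph F n S).Adj W B := by
        rw [adj_iff hS]
        exact ⟨fun hEq => h3 (congrArg Subtype.val hEq), le_refl _⟩
      rcases h W hadj with hWA | hWA
      · rw [adj_iff hS] at hWA
        exact hvA (hWA.2 hvB)
      · exact h2 (congrArg Subtype.val hWA)

def Mini (S : Matrix (Fin n) (Fin n) F) (A : OiVertex F n) : Prop :=
  ∀ C, Pre S C A → C = A

lemma mini_of_line (hS : Sᵀ = S) (hdet : IsUnit S.det) (hn : 4 ≤ n) {A : OiVertex F n}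
    (hA : finrank F A.1 = 1) : Mini S A := by
  intro C hC
  rcases pre_imp hS hdet hn hC with h1 | h2
  · apply Subtype.ext
    exact Submodule.eq_of_le_of_finrank_le h1 (hA ▸ finrank_pos_of_vertex C)
  · exfalso
    -- A.1 = prp C.1, so C.1 = prp A.1 with finrank n-1 ≥ 3
    have hCA : C.1 = prp S A.1 := by rw [h2, prp_prp hS hdet]
    have hfC : finrank F C.1 = n - 1 := by rw [hCA, finrank_prp hS hdet, hA]
    have hnle : ¬ C.1 ≤ A.1 := by
      intro hle
      have := Submodule.finrank_mono hle
      omega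
    obtain ⟨w, hwC, hwA⟩ := SetLike.not_le_iff_exists.1 hnle
    have hw0 : w ≠ 0 := fun h0 => hwA (h0 ▸ A.1.zero_mem)
    set W : OiVertex F n := lineV (by omega) w hw0 with hWdef
    have hadj : (oiGraph F n S).Adj W A := by
      rw [adj_iff hS]
      constructor
      · intro hEq
        apply hwA
        have : W.1 = A.1 := congrArg Subtype.val hEq
        rw [hWdef, lineV_coe] at this
        rw [← this]
        exact Submodule.mem_span_singleton_self w
      · rw [hWdef, lineV_coe, Submodule.span_le, Set.singleton_subset_iff, ← hCA]
        exact hwC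
    rcases hC W hadj with hWC | hWC
    · rw [adj_iff hS] at hWC
      have := hWC.2
      rw [hWdef, lineV_coe, Submodule.span_le, Set.singleton_subset_iff, ← h2] at this
      exact hwA this
    · have : W.1 = C.1 := congrArg Subtype.val hWC
      rw [hWdef, lineV_coe] at this
      have h1 : finrank F C.1 = 1 := by rw [← this, finrank_span_singleton hw0]
      omega

lemma line_of_mini (hS : Sᵀ = S) {A : OiVertex F n} (hA : Mini S A) : finrank F A.1 = 1 := by
  by_contra hne
  have h2 : 2 ≤ finrank F A.1 := by
    have := finrank_pos_of_vertex A
    omega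
  obtain ⟨a, haA, ha0⟩ := (Submodule.ne_bot_iff A.1).1 A.2.1
  have hspan : Submodule.span F {a} ≠ A.1 := by
    intro hEq
    rw [← hEq, finrank_span_singleton ha0] at h2
    omega
  have hnn : 2 ≤ n := by
    have := finrank_lt_of_vertex A
    omega
  set C : OiVertex F n := lineV hnn a ha0 with hC
  have : C = A := hA C (pre_of_le hS (by
    rw [hC, lineV_coe, Submodule.span_le, Set.singleton_subset_iff]; exact haA))
  exact hspan (congrArg Subtype.val this)

end Oi7

namespace Oi7

variable {F : Type*} [Field F] {n : ℕ} {S : Matrix (Fin n) (Fin n) F}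

def IsoLine (S : Matrix (Fin n) (Fin n) F) (A : OiVertex F n) : Prop :=
  ∃ v, v ≠ 0 ∧ A.1 = Submodule.span F {v} ∧ v ⬝ᵥ S *ᵥ v = 0

def GIso (S : Matrix (Fin n) (Fin n) F) (A : OiVertex F n) : Prop :=
  Mini S A ∧ ∃ W₁ W₂, W₁ ≠ W₂ ∧ (oiGraph F n S).Adj A W₁ ∧ (oiGraph F n S).Adj A W₂ ∧
    Pre S A W₁ ∧ Pre S A W₂

lemma le_prp_self_of_iso (hS : Sᵀ = S) {v : Fin n → F} (hiso : v ⬝ᵥ S *ᵥ v = 0) :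
    Submodule.span F {v} ≤ prp S (Submodule.span F {v}) := by
  rw [Submodule.span_le, Set.singleton_subset_iff]
  rw [SetLike.mem_coe, mem_prp]
  intro w hw
  obtain ⟨c, rfl⟩ := Submodule.mem_span_singleton.1 hw
  rw [smul_dotProduct, hiso, smul_zero]

lemma isoline_to_giso (hS : Sᵀ = S) (hdet : IsUnit S.det) (hn : 4 ≤ n) {A : OiVertex F n}
    (h : IsoLine S A) : GIso S A := by
  obtain ⟨v, hv0, hAv, hiso⟩ := h
  have hA1 : finrank F A.1 = 1 := by rw [hAv, finrank_span_singleton hv0]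
  refine ⟨mini_of_line hS hdet hn hA1, ?_⟩
  have hAle : A.1 ≤ prp S A.1 := by
    rw [hAv]; exact le_prp_self_of_iso hS hiso
  set W₁ : OiVertex F n := prpV hS hdet A with hW₁
  have hfW₁ : finrank F W₁.1 = n - 1 := by
    rw [hW₁]
    show finrank F (prp S A.1) = n - 1
    rw [finrank_prp hS hdet, hA1]
  have hnle : ¬ (prp S A.1 ≤ A.1) := by
    intro hle
    have := Submodule.finrank_mono hle
    rw [finrank_prp hS hdet, hA1] at this
    omega
  obtain ⟨w, hwP, hwA⟩ := SetLike.not_le_iff_exists.1 hnle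
  have hw0 : w ≠ 0 := fun h0 => hwA (h0 ▸ A.1.zero_mem)
  have hW2le : A.1 ⊔ Submodule.span F {w} ≤ prp S A.1 := by
    refine sup_le hAle ?_
    rw [Submodule.span_le, Set.singleton_subset_iff]
    exact hwP
  set W₂ : OiVertex F n := ⟨A.1 ⊔ Submodule.span F {w}, by
    constructor
    · intro hbot
      exact A.2.1 (le_bot_iff.1 (le_trans le_sup_left hbot.le))
    · intro htop
      exact (prpV hS hdet A).2.2 (top_le_iff.1 (le_trans htop.ge hW2le))⟩ with hW₂
  have hwW₂ : w ∈ W₂.1 := by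
    exact (le_sup_right : Submodule.span F {w} ≤ _) (Submodule.mem_span_singleton_self w)
  have hfW₂ : finrank F W₂.1 ≤ 2 := by
    have heq := Submodule.finrank_sup_add_finrank_inf_eq A.1 (Submodule.span F {w})
    rw [hA1, finrank_span_singleton hw0] at heq
    show finrank F (A.1 ⊔ Submodule.span F {w} : Submodule F (Fin n → F)) ≤ 2
    omega
  refine ⟨W₁, W₂, ?_, ?_, ?_, pre_of_le hS hAle, pre_of_le hS le_sup_left⟩
  · intro hEq
    rw [hEq] at hfW₁
    omega
  · rw [adj_iff hS]
    constructor
    · intro hEq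
      apply_fun (fun X => finrank F X.1) at hEq
      rw [hA1, hfW₁] at hEq
      omega
    · show A.1 ≤ prp S (prp S A.1)
      rw [prp_prp hS hdet]
  · rw [adj_iff hS]
    constructor
    · intro hEq
      exact hwA (hEq ▸ hwW₂)
    · rw [le_prp_comm hS]
      exact hW2le

lemma giso_to_isoline (hS : Sᵀ = S) (hdet : IsUnit S.det) (hn : 4 ≤ n) {A : OiVertex F n}
    (h : GIso S A) : IsoLine S A := by
  obtain ⟨hmini, W₁, W₂, hne, hadj₁, hadj₂, hpre₁, hpre₂⟩ := h
  have hA1 : finrank F A.1 = 1 := line_of_mini hS hmini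
  obtain ⟨a, haA, ha0⟩ := (Submodule.ne_bot_iff A.1).1 A.2.1
  have hspan : Submodule.span F {a} = A.1 :=
    Submodule.eq_of_le_of_finrank_le
      (by rw [Submodule.span_le, Set.singleton_subset_iff]; exact haA)
      (by rw [hA1, finrank_span_singleton ha0])
  refine ⟨a, ha0, hspan.symm, ?_⟩
  by_contra hani
  have key : ∀ W : OiVertex F n, (oiGraph F n S).Adj A W → Pre S A W → W.1 = prp S A.1 := by
    intro W hadj hpre
    rcases pre_imp hS hdet hn hpre with hle | heq
    · exfalso
      rw [adj_iff hS] at hadj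
      have haW : a ∈ W.1 := hle haA
      have haP : a ∈ prp S W.1 := hadj.2 haA
      exact hani (mem_prp.1 haP a haW)
    · exact heq
  exact hne (Subtype.ext ((key W₁ hadj₁ hpre₁).trans (key W₂ hadj₂ hpre₂).symm))

variable {G' : SimpleGraph (OiVertex F n)}

lemma pre_map (τ : (oiGraph F n S) ≃g (oiGraph F n S)) {A B : OiVertex F n}
    (h : Pre S A B) : Pre S (τ A) (τ B) := by
  intro W hW
  have h1 : (oiGraph F n S).Adj (τ.symm W) B := by
    have := τ.symm.map_adj_iff.2 hW
    rwa [τ.symm_apply_apply] at this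
  rcases h _ h1 with h2 | h2
  · left
    have := τ.map_adj_iff.2 h2
    rwa [τ.apply_symm_apply] at this
  · right
    rw [← τ.apply_symm_apply W, h2]

lemma giso_map (τ : (oiGraph F n S) ≃g (oiGraph F n S)) {A : OiVertex F n}
    (h : GIso S A) : GIso S (τ A) := by
  obtain ⟨hmini, W₁, W₂, hne, hadj₁, hadj₂, hpre₁, hpre₂⟩ := h
  refine ⟨?_, τ W₁, τ W₂, fun hEq => hne (τ.injective hEq),
    τ.map_adj_iff.2 hadj₁, τ.map_adj_iff.2 hadj₂, pre_map τ hpre₁, pre_map τ hpre₂⟩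
  intro C hC
  have h1 := pre_map τ.symm hC
  rw [τ.symm_apply_apply] at h1
  have h2 := hmini _ h1
  rw [← τ.apply_symm_apply C, h2]

lemma isoline_map (hS : Sᵀ = S) (hdet : IsUnit S.det) (hn : 4 ≤ n)
    (τ : (oiGraph F n S) ≃g (oiGraph F n S)) {A : OiVertex F n}
    (h : IsoLine S A) : IsoLine S (τ A) :=
  giso_to_isoline hS hdet hn (giso_map τ (isoline_to_giso hS hdet hn h))

end Oi7

namespace Oi7

variable {F : Type*} [Field F] {ν : ℕ}

lemma oiMat_apply (z : F) (i j : Fin (2*ν+0)) :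
    oiMat F ν 0 z i j =
    if (i : ℕ) < ν ∧ (j : ℕ) = (i : ℕ) + ν then 1
    else if (j : ℕ) < ν ∧ (i : ℕ) = (j : ℕ) + ν then 1 else 0 := by
  have hi := i.isLt
  simp only [oiMat, Matrix.of_apply]
  split_ifs <;> first | rfl | omega

lemma oiMat_symm : (oiMat F ν 0 1)ᵀ = oiMat F ν 0 1 := by
  ext i j
  rw [Matrix.transpose_apply, oiMat_apply, oiMat_apply]
  split_ifs <;> first | rfl | omega

lemma oiMat_diag (hν : 2 ≤ ν) (i : Fin (2*ν+0)) : oiMat F ν 0 1 i i = 0 := by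
  rw [oiMat_apply]
  split_ifs <;> first | omega | rfl

lemma oiMat_pair {i j : Fin (2*ν+0)} (h : (j:ℕ) = (i:ℕ) + ν ∨ (i:ℕ) = (j:ℕ) + ν) :
    oiMat F ν 0 1 i j = 1 := by
  have hi := i.isLt
  have hj := j.isLt
  rw [oiMat_apply]
  split_ifs <;> first | rfl | omega

lemma oiMat_nonpair {i j : Fin (2*ν+0)}
    (h : ¬((j:ℕ) = (i:ℕ) + ν ∨ (i:ℕ) = (j:ℕ) + ν)) :
    oiMat F ν 0 1 i j = 0 := by
  rw [oiMat_apply]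
  split_ifs <;> first | rfl | omega

lemma oiMat_mul_self (hν : 2 ≤ ν) : oiMat F ν 0 1 * oiMat F ν 0 1 = 1 := by
  ext i j
  rw [Matrix.mul_apply]
  have hi := i.isLt
  have hj := j.isLt
  rcases Nat.lt_or_ge (i:ℕ) ν with hc | hc
  · set k₀ : Fin (2*ν+0) := ⟨(i:ℕ) + ν, by omega⟩ with hk₀
    have hk : (k₀ : ℕ) = (i:ℕ) + ν := rfl
    rw [Finset.sum_eq_single k₀]
    · have h1 : oiMat F ν 0 1 i k₀ = 1 := oiMat_pair (Or.inl rfl)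
      rw [h1, one_mul, Matrix.one_apply]
      by_cases hij : i = j
      · rw [if_pos hij, oiMat_pair (Or.inr (by rw [← hij]))]
      · rw [if_neg hij, oiMat_nonpair]
        intro hcon
        rcases hcon with hcon | hcon
        · exact hij (Fin.ext (by omega))
        · omega
    · intro b _ hbne
      have h0 : oiMat F ν 0 1 i b = 0 := by
        apply oiMat_nonpair
        intro hcon
        apply hbne
        apply Fin.ext
        rcases hcon with hcon | hcon <;> omega
      rw [h0, zero_mul]
    · intro habs
      exact absurd (Finset.mem_univ k₀) habs
  · set k₀ : Fin (2*ν+0) := ⟨(i:ℕ) - ν, by omega⟩ with hk₀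
    have hk : (k₀ : ℕ) = (i:ℕ) - ν := rfl
    rw [Finset.sum_eq_single k₀]
    · have h1 : oiMat F ν 0 1 i k₀ = 1 := oiMat_pair (Or.inr (by simp [hk₀]; omega))
      rw [h1, one_mul, Matrix.one_apply]
      by_cases hij : i = j
      · rw [if_pos hij, oiMat_pair (Or.inl (by rw [← hij]; simp [hk₀]; omega))]
      · rw [if_neg hij, oiMat_nonpair]
        intro hcon
        have hk : (k₀ : ℕ) = (i:ℕ) - ν := rfl
        rcases hcon with hcon | hcon
        · exact hij (Fin.ext (by omega))
        · omega
    · intro b _ hbne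
      have h0 : oiMat F ν 0 1 i b = 0 := by
        apply oiMat_nonpair
        intro hcon
        apply hbne
        apply Fin.ext
        have hk : (k₀ : ℕ) = (i:ℕ) - ν := rfl
        have hb := b.isLt
        rcases hcon with hcon | hcon <;> omega
      rw [h0, zero_mul]
    · intro habs
      exact absurd (Finset.mem_univ k₀) habs

end Oi7

namespace Oi7

variable {F : Type*} [Field F] {n : ℕ} {S : Matrix (Fin n) (Fin n) F}

lemma vecMul_form {T : Matrix (Fin n) (Fin n) F} (hT : T * S * Tᵀ = S) (a b : Fin n → F) :
    (a ᵥ* T) ⬝ᵥ S *ᵥ (b ᵥ* T) = a ⬝ᵥ S *ᵥ b := by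
  rw [← Matrix.mulVec_transpose T b, Matrix.mulVec_mulVec, Matrix.dotProduct_mulVec,
    Matrix.vecMul_vecMul, ← Matrix.mul_assoc, hT, ← Matrix.dotProduct_mulVec]

lemma map_cancel {M N : Matrix (Fin n) (Fin n) F} (h : M * N = 1)
    (W : Submodule F (Fin n → F)) :
    (W.map (Matrix.vecMulLinear M)).map (Matrix.vecMulLinear N) = W := by
  rw [← Submodule.map_comp]
  have hcomp : (Matrix.vecMulLinear N).comp (Matrix.vecMulLinear M) = LinearMap.id := by
    apply LinearMap.ext
    intro x
    simp only [LinearMap.comp_apply, Matrix.vecMulLinear_apply, LinearMap.id_apply,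
      Matrix.vecMul_vecMul, h, Matrix.vecMul_one]
  rw [hcomp, Submodule.map_id]

lemma map_nt {M N : Matrix (Fin n) (Fin n) F} (h : M * N = 1) (W : OiVertex F n) :
    W.1.map (Matrix.vecMulLinear M) ≠ ⊥ ∧ W.1.map (Matrix.vecMulLinear M) ≠ ⊤ := by
  have hNM : N * M = 1 := mul_eq_one_comm.1 h
  constructor
  · intro hbot
    apply W.2.1
    rw [← map_cancel h W.1, hbot, Submodule.map_bot]
  · intro htop
    have hex : ∃ x, x ∉ W.1 := by
      by_contra hc
      push_neg at hc
      exact W.2.2 (Submodule.eq_top_iff'.2 hc)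
    obtain ⟨x, hxW⟩ := hex
    apply hxW
    have hx : x ᵥ* M ∈ W.1.map (Matrix.vecMulLinear M) := by
      rw [htop]
      exact Submodule.mem_top
    obtain ⟨w, hw, hwx⟩ := Submodule.mem_map.1 hx
    rw [Matrix.vecMulLinear_apply] at hwx
    have : w = x := by
      have := congrArg (fun y => y ᵥ* N) hwx
      simpa only [Matrix.vecMul_vecMul, h, Matrix.vecMul_one] using this
    rwa [← this]

lemma inv_mem_O {T : Matrix (Fin n) (Fin n) F} (hT : T * S * Tᵀ = S) (hTdet : IsUnit T.det) :
    T⁻¹ * S * (T⁻¹)ᵀ = S := by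
  have h1 : Tᵀ * Tᵀ⁻¹ = 1 := Matrix.mul_nonsing_inv _ (by rw [Matrix.det_transpose]; exact hTdet)
  have h2 : T⁻¹ * T = 1 := Matrix.nonsing_inv_mul _ hTdet
  calc T⁻¹ * S * (T⁻¹)ᵀ = T⁻¹ * (T * S * Tᵀ) * (T⁻¹)ᵀ := by rw [hT]
    _ = (T⁻¹ * T) * (S * (Tᵀ * (T⁻¹)ᵀ)) := by simp only [Matrix.mul_assoc]
    _ = S := by rw [Matrix.transpose_nonsing_inv, h1, h2, Matrix.mul_one, Matrix.one_mul]

lemma map_inj {T : Matrix (Fin n) (Fin n) F} (hTdet : IsUnit T.det)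
    {A B : OiVertex F n}
    (h : A.1.map (Matrix.vecMulLinear T) = B.1.map (Matrix.vecMulLinear T)) : A = B := by
  apply Subtype.ext
  rw [← map_cancel (Matrix.mul_nonsing_inv _ hTdet) A.1, h,
    map_cancel (Matrix.mul_nonsing_inv _ hTdet) B.1]

lemma mem_map_row {T : Matrix (Fin n) (Fin n) F} {W : Submodule F (Fin n → F)}
    {a : Fin n → F} (ha : a ∈ W) : a ᵥ* T ∈ W.map (Matrix.vecMulLinear T) := by
  refine Submodule.mem_map.2 ⟨a, ha, ?_⟩
  rw [Matrix.vecMulLinear_apply]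

/-- the graph automorphism induced by an orthogonal matrix -/
noncomputable def oiso {T : Matrix (Fin n) (Fin n) F} (hT : T * S * Tᵀ = S)
    (hTdet : IsUnit T.det) : (oiGraph F n S) ≃g (oiGraph F n S) where
  toFun := fun W => ⟨W.1.map (Matrix.vecMulLinear T),
    map_nt (Matrix.mul_nonsing_inv _ hTdet) W⟩
  invFun := fun W => ⟨W.1.map (Matrix.vecMulLinear T⁻¹),
    map_nt (Matrix.nonsing_inv_mul _ hTdet) W⟩
  left_inv := fun W => Subtype.ext (map_cancel (Matrix.mul_nonsing_inv _ hTdet) W.1)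
  right_inv := fun W => Subtype.ext (map_cancel (Matrix.nonsing_inv_mul _ hTdet) W.1)
  map_rel_iff' := by
    intro A B
    constructor
    · rintro ⟨h1, h2, h3⟩
      refine ⟨?_, ?_, ?_⟩
      · intro hEq
        exact h1 (by rw [hEq])
      · intro a ha b hb
        rw [← vecMul_form hT a b]
        exact h2 _ (mem_map_row ha) _ (mem_map_row hb)
      · intro a ha b hb
        rw [← vecMul_form hT a b]
        exact h3 _ (mem_map_row ha) _ (mem_map_row hb)
    · rintro ⟨h1, h2, h3⟩
      refine ⟨?_, ?_, ?_⟩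
      · intro hEq
        exact h1 (map_inj hTdet (congrArg Subtype.val hEq))
      · rintro a ha b hb
        obtain ⟨a', ha', rfl⟩ := Submodule.mem_map.1 ha
        obtain ⟨b', hb', rfl⟩ := Submodule.mem_map.1 hb
        rw [Matrix.vecMulLinear_apply, Matrix.vecMulLinear_apply, vecMul_form hT]
        exact h2 a' ha' b' hb'
      · rintro a ha b hb
        obtain ⟨a', ha', rfl⟩ := Submodule.mem_map.1 ha
        obtain ⟨b', hb', rfl⟩ := Submodule.mem_map.1 hb
        rw [Matrix.vecMulLinear_apply, Matrix.vecMulLinear_apply, vecMul_form hT]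
        exact h3 a' ha' b' hb'

end Oi7

namespace Oi7

variable {F : Type*} [Field F] {n : ℕ}

lemma gram_entry (T S : Matrix (Fin n) (Fin n) F) (i j : Fin n) :
    (T * S * Tᵀ) i j = (fun k => T i k) ⬝ᵥ S *ᵥ (fun k => T j k) := by
  rw [Matrix.mul_assoc, Matrix.mul_apply]
  simp only [Matrix.mul_apply, dotProduct, Matrix.mulVec, Matrix.transpose_apply]

end Oi7

open Oi7 in
theorem stmt7aux (F : Type*) [Field F] (ν : ℕ) (hν : 2 ≤ ν)
    (τ : (oiGraph F (2*ν+0) (oiMat F ν 0 1)) ≃g (oiGraph F (2*ν+0) (oiMat F ν 0 1))) :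
    ∃ T : Matrix (Fin (2*ν+0)) (Fin (2*ν+0)) F,
      T * oiMat F ν 0 1 * Tᵀ = oiMat F ν 0 1 ∧
      ∃ ρ : (oiGraph F (2*ν+0) (oiMat F ν 0 1)) ≃g (oiGraph F (2*ν+0) (oiMat F ν 0 1)),
        (∀ (j : Fin (2*ν+0)) (X : OiVertex F (2*ν+0)),
            X.1 = Submodule.span F {Pi.single j 1} → ρ X = X) ∧
        ∀ W : OiVertex F (2*ν+0),
          ((τ W).1 : Submodule F (Fin (2*ν+0) → F)) =
            ((ρ W).1).map (Matrix.vecMulLinear T) := by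
  classical
  have hn : 4 ≤ 2*ν+0 := by omega
  have hS : (oiMat F ν 0 1)ᵀ = oiMat F ν 0 1 := oiMat_symm
  have hSS : oiMat F ν 0 1 * oiMat F ν 0 1 = 1 := oiMat_mul_self hν
  have hdet : IsUnit (oiMat F ν 0 1).det :=
    (Matrix.isUnit_iff_isUnit_det _).1 ⟨⟨oiMat F ν 0 1, oiMat F ν 0 1, hSS, hSS⟩, rfl⟩
  have hsing : ∀ j : Fin (2*ν+0), (Pi.single j (1:F) : Fin (2*ν+0) → F) ≠ 0 := by
    intro j h
    have := congrFun h j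
    rw [Pi.single_eq_same] at this
    exact one_ne_zero this
  set E : Fin (2*ν+0) → OiVertex F (2*ν+0) :=
    fun j => lineV (by omega) (Pi.single j 1) (hsing j) with hE
  have hEcoe : ∀ j, (E j).1 = Submodule.span F {Pi.single j 1} := fun j => rfl
  have hdot : ∀ i j : Fin (2*ν+0),
      (Pi.single i (1:F)) ⬝ᵥ (oiMat F ν 0 1) *ᵥ (Pi.single j 1) = oiMat F ν 0 1 i j := by
    intro i j
    rw [Matrix.mulVec_single, single_dotProduct, one_mul]
    simp
  have hEne : ∀ i j : Fin (2*ν+0), i ≠ j → E i ≠ E j := by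
    intro i j hij hEq
    have h1 : (E i).1 = (E j).1 := by rw [hEq]
    have h2 : (Pi.single i (1:F) : Fin (2*ν+0) → F) ∈
        Submodule.span F {(Pi.single j (1:F) : Fin (2*ν+0) → F)} := by
      rw [← hEcoe, ← h1, hEcoe]
      exact Submodule.mem_span_singleton_self _
    obtain ⟨c, hc⟩ := Submodule.mem_span_singleton.1 h2
    have h3 := congrFun hc i
    rw [Pi.smul_apply, Pi.single_apply, Pi.single_apply, if_neg hij, if_pos rfl, smul_zero] at h3
    exact one_ne_zero h3.symm
  have hadjE : ∀ i j : Fin (2*ν+0), i ≠ j → ¬((j:ℕ) = (i:ℕ) + ν ∨ (i:ℕ) = (j:ℕ) + ν) →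
      (oiGraph F (2*ν+0) (oiMat F ν 0 1)).Adj (E i) (E j) := by
    intro i j hij hnp
    rw [adj_iff hS]
    refine ⟨hEne i j hij, ?_⟩
    rw [hEcoe, Submodule.span_le, Set.singleton_subset_iff, SetLike.mem_coe, mem_prp]
    intro w hw
    rw [hEcoe] at hw
    obtain ⟨c, rfl⟩ := Submodule.mem_span_singleton.1 hw
    rw [smul_dotProduct, hdot, oiMat_nonpair (by tauto), smul_zero]
  have hnadjE : ∀ i j : Fin (2*ν+0), ((j:ℕ) = (i:ℕ) + ν ∨ (i:ℕ) = (j:ℕ) + ν) →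
      ¬ (oiGraph F (2*ν+0) (oiMat F ν 0 1)).Adj (E i) (E j) := by
    intro i j hp hadj
    have m1 : (Pi.single i (1:F) : Fin (2*ν+0) → F) ∈ (E i).1 := by
      rw [hEcoe]; exact Submodule.mem_span_singleton_self _
    have m2 : (Pi.single j (1:F) : Fin (2*ν+0) → F) ∈ (E j).1 := by
      rw [hEcoe]; exact Submodule.mem_span_singleton_self _
    have h1 := hadj.2.1 _ m1 _ m2
    rw [hdot, oiMat_pair hp] at h1
    exact one_ne_zero h1
  have hisoE : ∀ j, IsoLine (oiMat F ν 0 1) (E j) := by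
    intro j
    refine ⟨Pi.single j 1, hsing j, hEcoe j, ?_⟩
    rw [hdot, oiMat_diag hν]
  have hisoT : ∀ j, IsoLine (oiMat F ν 0 1) (τ (E j)) :=
    fun j => isoline_map hS hdet hn τ (hisoE j)
  choose v hv0 hvspan hviso using hisoT
  have hBv0 : ∀ i j : Fin (2*ν+0), i ≠ j → ¬((j:ℕ) = (i:ℕ) + ν ∨ (i:ℕ) = (j:ℕ) + ν) →
      v i ⬝ᵥ (oiMat F ν 0 1) *ᵥ v j = 0 := by
    intro i j hij hnp
    have hadj := τ.map_adj_iff.2 (hadjE i j hij hnp)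
    refine hadj.2.1 _ ?_ _ ?_
    · rw [hvspan i]; exact Submodule.mem_span_singleton_self _
    · rw [hvspan j]; exact Submodule.mem_span_singleton_self _
  have hBvne : ∀ i j : Fin (2*ν+0), ((j:ℕ) = (i:ℕ) + ν ∨ (i:ℕ) = (j:ℕ) + ν) →
      v i ⬝ᵥ (oiMat F ν 0 1) *ᵥ v j ≠ 0 := by
    intro i j hp hB0
    have hij : i ≠ j := by
      intro h
      rcases hp with hp | hp <;> (rw [h] at hp; omega)
    have hB0' : v j ⬝ᵥ (oiMat F ν 0 1) *ᵥ v i = 0 := by rw [bsym hS]; exact hB0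
    apply hnadjE i j hp
    apply τ.map_adj_iff.1
    refine ⟨fun hEq => hEne i j hij (τ.injective hEq), ?_, ?_⟩
    · intro a ha b hb
      rw [hvspan i] at ha
      rw [hvspan j] at hb
      obtain ⟨c, rfl⟩ := Submodule.mem_span_singleton.1 ha
      obtain ⟨d, rfl⟩ := Submodule.mem_span_singleton.1 hb
      simp [Matrix.mulVec_smul, dotProduct_smul, smul_dotProduct, hB0]
    · intro a ha b hb
      rw [hvspan j] at ha
      rw [hvspan i] at hb
      obtain ⟨c, rfl⟩ := Submodule.mem_span_singleton.1 ha
      obtain ⟨d, rfl⟩ := Submodule.mem_span_singleton.1 hb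
      simp [Matrix.mulVec_smul, dotProduct_smul, smul_dotProduct, hB0']
  -- the pairing index
  set jm : Fin (2*ν+0) → Fin (2*ν+0) :=
    fun j => ⟨(j:ℕ) - ν, by have := j.isLt; omega⟩ with hjm
  set t : Fin (2*ν+0) → (Fin (2*ν+0) → F) :=
    fun j => if (j:ℕ) < ν then v j else (v (jm j) ⬝ᵥ (oiMat F ν 0 1) *ᵥ v j)⁻¹ • v j with htdef
  have hpairjm : ∀ j : Fin (2*ν+0), ¬ (j:ℕ) < ν → (j:ℕ) = ((jm j):ℕ) + ν := by
    intro j hj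
    have := j.isLt
    simp only [hjm]
    omega
  have ht : ∀ j, ∃ c : F, c ≠ 0 ∧ t j = c • v j := by
    intro j
    by_cases hj : (j:ℕ) < ν
    · exact ⟨1, one_ne_zero, by simp [htdef, hj]⟩
    · refine ⟨(v (jm j) ⬝ᵥ (oiMat F ν 0 1) *ᵥ v j)⁻¹,
        inv_ne_zero (hBvne (jm j) j (Or.inl (hpairjm j hj))), by simp [htdef, hj]⟩
  set T : Matrix (Fin (2*ν+0)) (Fin (2*ν+0)) F := Matrix.of t with hTdef
  have hrowT : ∀ j, (fun k => T j k) = t j := fun j => rfl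
  have hT : T * oiMat F ν 0 1 * Tᵀ = oiMat F ν 0 1 := by
    ext i j
    rw [gram_entry, hrowT, hrowT]
    have hi := i.isLt
    have hj := j.isLt
    by_cases hij : i = j
    · subst hij
      obtain ⟨c, hc0, hci⟩ := ht i
      rw [hci, oiMat_diag hν]
      simp [Matrix.mulVec_smul, dotProduct_smul, smul_dotProduct, hviso i]
    · by_cases hp1 : (j:ℕ) = (i:ℕ) + ν
      · have hiν : (i:ℕ) < ν := by omega
        have hjν : ¬ (j:ℕ) < ν := by omega
        have hjmj : jm j = i := by
          apply Fin.ext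
          simp only [hjm]
          omega
        have hti : t i = v i := by simp [htdef, hiν]
        have htj : t j = (v i ⬝ᵥ (oiMat F ν 0 1) *ᵥ v j)⁻¹ • v j := by
          simp [htdef, hjν, hjmj]
        rw [hti, htj, Matrix.mulVec_smul, dotProduct_smul, smul_eq_mul,
          inv_mul_cancel₀ (hBvne i j (Or.inl hp1)), oiMat_pair (Or.inl hp1)]
      · by_cases hp2 : (i:ℕ) = (j:ℕ) + ν
        · have hjν : (j:ℕ) < ν := by omega
          have hiν : ¬ (i:ℕ) < ν := by omega
          have hjmi : jm i = j := by
            apply Fin.ext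
            simp only [hjm]
            omega
          have htj : t j = v j := by simp [htdef, hjν]
          have hti : t i = (v j ⬝ᵥ (oiMat F ν 0 1) *ᵥ v i)⁻¹ • v i := by
            simp [htdef, hiν, hjmi]
          have hswap : v j ⬝ᵥ (oiMat F ν 0 1) *ᵥ v i = v i ⬝ᵥ (oiMat F ν 0 1) *ᵥ v j :=
            bsym hS _ _
          rw [hti, htj, smul_dotProduct, smul_eq_mul, hswap,
            inv_mul_cancel₀ (hBvne i j (Or.inr hp2)), oiMat_pair (Or.inr hp2)]
        · obtain ⟨c, hc0, hci⟩ := ht i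
          obtain ⟨d, hd0, hdj⟩ := ht j
          rw [hci, hdj, oiMat_nonpair (by tauto)]
          simp [Matrix.mulVec_smul, dotProduct_smul, smul_dotProduct,
            hBv0 i j hij (by tauto)]
  have hTdet : IsUnit T.det := by
    have h1 := congrArg Matrix.det hT
    rw [Matrix.det_mul, Matrix.det_mul, Matrix.det_transpose] at h1
    refine isUnit_iff_ne_zero.2 fun h0 => hdet.ne_zero ?_
    rw [h0, zero_mul, zero_mul] at h1
    exact h1.symm
  have hTinvO : T⁻¹ * oiMat F ν 0 1 * (T⁻¹)ᵀ = oiMat F ν 0 1 := inv_mem_O hT hTdet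
  have hTidet : IsUnit (T⁻¹).det := Matrix.isUnit_nonsing_inv_det T hTdet
  refine ⟨T, hT, τ.trans (oiso hTinvO hTidet), ?_, ?_⟩
  · intro j X hX
    have hXE : X = E j := Subtype.ext (by rw [hX, hEcoe])
    rw [hXE]
    apply Subtype.ext
    show ((τ (E j)).1).map (Matrix.vecMulLinear T⁻¹) = (E j).1
    rw [hvspan j, Submodule.map_span, Set.image_singleton, Matrix.vecMulLinear_apply, hEcoe]
    obtain ⟨c, hc0, hcj⟩ := ht j
    have hvj : v j = c⁻¹ • t j := by
      rw [hcj, smul_smul, inv_mul_cancel₀ hc0, one_smul]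
    have hrowj : t j = Pi.single j 1 ᵥ* T := by
      funext k
      rw [Matrix.single_vecMul]
      show t j k = 1 * T j k
      rw [one_mul]
      rfl
    rw [hvj, Matrix.smul_vecMul, hrowj, Matrix.vecMul_vecMul,
      Matrix.mul_nonsing_inv _ hTdet, Matrix.vecMul_one]
    exact Submodule.span_singleton_smul_eq (IsUnit.mk0 _ (inv_ne_zero hc0)) _
  · intro W
    show (τ W).1 = (((τ W).1).map (Matrix.vecMulLinear T⁻¹)).map (Matrix.vecMulLinear T)
    exact (map_cancel (Matrix.nonsing_inv_mul _ hTdet) ((τ W).1)).symm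


/-- For `ν ≥ 2`, `δ = 0`: every automorphism `τ` of `Oi(2ν, q)` factors as
`τ = σ_T ∘ ρ` where `T ∈ O_{2ν}(F)` and `ρ` fixes all the coordinate lines
`[e_i]`, `[f_i] = [e_{ν+i}]` (`1 ≤ i ≤ ν`). -/
theorem stmt7 (F : Type*) [Field F] [Fintype F] (hF : ringChar F ≠ 2)
    (ν : ℕ) (hν : 2 ≤ ν)
    (τ : (oiGraph F (2*ν+0) (oiMat F ν 0 1)) ≃g (oiGraph F (2*ν+0) (oiMat F ν 0 1))) :
    ∃ T : Matrix (Fin (2*ν+0)) (Fin (2*ν+0)) F,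
      T * oiMat F ν 0 1 * Tᵀ = oiMat F ν 0 1 ∧
      ∃ ρ : (oiGraph F (2*ν+0) (oiMat F ν 0 1)) ≃g (oiGraph F (2*ν+0) (oiMat F ν 0 1)),
        (∀ (j : Fin (2*ν+0)) (X : OiVertex F (2*ν+0)),
            X.1 = Submodule.span F {Pi.single j 1} → ρ X = X) ∧
        ∀ W : OiVertex F (2*ν+0),
          ((τ W).1 : Submodule F (Fin (2*ν+0) → F)) =
            ((ρ W).1).map (Matrix.vecMulLinear T) :=
  stmt7aux F ν hν τ
end
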